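/- arXiv:1412.4646 — 2 statements merged into one kernel-verified Lean document; each statement's English description precedes it below -/
import Mathlib

section
/- For a run [i..j] of smallest period p in a word w, the lexicographically greatest proper suffix w[k..j] of the run factor satisfies j - k + 1 ≥ p, i.e., it contains at least a full period of the run. -/
open List

universe u

/-- The factor `w[i..j]` of a word (inclusive positions). -/
def factor {α : Type u} (w : List α) (i j : ℕ) : List α := (w.drop i).take (j - i + 1)

/-- `p` is a period length of the word `u`. -/
def HasPeriodLen {α : Type u} (u : List α) (p : ℕ) : Prop :=
  1 ≤ p ∧ ∀ k, k + p < u.length → u[k]? = u[k + p]?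

/-- The smallest period of a word. -/
noncomputable def minPeriod {α : Type u} (u : List α) : ℕ := sInf {p | HasPeriodLen u p}

/-- `[i..j]` is a run in `w`: the factor is periodic with smallest period at most half
its length, and the periodicity extends neither to the left nor to the right. -/
def IsRun {α : Type u} (w : List α) (i j : ℕ) : Prop :=
  i < j ∧ j < w.length ∧
  2 * minPeriod (factor w i j) ≤ j - i + 1 ∧
  (0 < i → minPeriod (factor w i j) < minPeriod (factor w (i - 1) j)) ∧
  (j + 1 < w.length → minPeriod (factor w i j) < minPeriod (factor w i (j + 1)))
/-- `k` is the starting position of the greatest proper suffix of the factor `w[i..j]`,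
with respect to the strict order `lt` on words. -/
def IsGreatestProperSuffixPos {α : Type u} (lt : List α → List α → Prop)
    (w : List α) (i j k : ℕ) : Prop :=
  i < k ∧ k ≤ j ∧ ∀ k', i < k' → k' ≤ j → k' ≠ k → lt (factor w k' j) (factor w k j)

lemma factor_length {α : Type u} (w : List α) {a j : ℕ} (haj : a ≤ j) (hj : j < w.length) :
    (factor w a j).length = j - a + 1 := by
  simp [factor]
  omega

lemma factor_getElem? {α : Type u} (w : List α) {a j s : ℕ} (hs : s ≤ j - a) :
    (factor w a j)[s]? = w[a + s]? := by
  rw [factor, List.getElem?_take_of_lt (by omega), List.getElem?_drop]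

lemma lex_append_cons {α : Type u} (r : α → α → Prop) (l : List α) (a : α) (t : List α) :
    List.Lex r l (l ++ a :: t) := by
  induction l with
  | nil => exact List.Lex.nil
  | cons x xs ih => exact List.Lex.cons ih

/-- The lexicographically greatest proper suffix `w[k..j]` of a run factor contains at
least a full period of the run: `j - k + 1 ≥ p`. -/
theorem greatest_proper_suffix_ge_period {α : Type u} [LinearOrder α] (w : List α)
    (i j k : ℕ) (h : IsRun w i j)
    (hk : IsGreatestProperSuffixPos (List.Lex (· < ·)) w i j k) :
    minPeriod (factor w i j) ≤ j - k + 1 := by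
  by_contra hcon
  push_neg at hcon
  obtain ⟨hij, hjw, h2p, -, -⟩ := h
  obtain ⟨hik, hkj, hmax⟩ := hk
  set u := factor w i j with hu
  set p := minPeriod u with hp
  have hulen : u.length = j - i + 1 := factor_length w (le_of_lt hij) hjw
  have hne : {q | HasPeriodLen u q}.Nonempty := by
    exact ⟨u.length + 1, by constructor <;> omega⟩
  have hper : HasPeriodLen u p := Nat.sInf_mem hne
  have hp1 : 1 ≤ p := hper.1
  -- key arithmetic facts
  have hpk : p ≤ k := by omega
  have hik' : i < k - p := by omega
  -- character equality via periodicity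
  have hchar : ∀ s, s ≤ j - k → w[(k - p) + s]? = w[k + s]? := by
    intro s hs
    have h1 : ((k - p - i) + s) + p < u.length := by omega
    have h2 := hper.2 ((k - p - i) + s) h1
    have e1 : (factor w i j)[(k - p - i) + s]? = w[i + ((k - p - i) + s)]? :=
      factor_getElem? w (by omega)
    have e2 : (factor w i j)[((k - p - i) + s) + p]? = w[i + (((k - p - i) + s) + p)]? :=
      factor_getElem? w (by omega)
    rw [← hu] at e1 e2
    have e3 : i + ((k - p - i) + s) = (k - p) + s := by omega
    have e4 : i + (((k - p - i) + s) + p) = k + s := by omega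
    rw [e3] at e1; rw [e4] at e2
    rw [← e1, ← e2, h2]
  -- factor w k j is a strict prefix of factor w (k-p) j
  have hpref : (factor w (k - p) j).take (j - k + 1) = factor w k j := by
    apply List.ext_getElem?
    intro s
    by_cases hs : s ≤ j - k
    · rw [List.getElem?_take_of_lt (by omega), factor_getElem? w (by omega),
        factor_getElem? w hs, hchar s hs]
    · rw [List.getElem?_take_eq_none (by omega), eq_comm, List.getElem?_eq_none]
      rw [factor_length w hkj hjw]; omega
  have hispref : factor w k j <+: factor w (k - p) j :=
    ⟨(factor w (k - p) j).drop (j - k + 1), by rw [← hpref, List.take_append_drop]⟩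
  obtain ⟨t, ht⟩ := hispref
  have hlen' : (factor w (k - p) j).length = j - (k - p) + 1 :=
    factor_length w (by omega) hjw
  have hlenk : (factor w k j).length = j - k + 1 := factor_length w hkj hjw
  have htne : t ≠ [] := by
    intro h0
    rw [h0, List.append_nil] at ht
    have := congrArg List.length ht
    rw [hlenk, hlen'] at this
    omega
  obtain ⟨a, t', rfl⟩ := List.exists_cons_of_ne_nil htne
  have hlex1 : List.Lex (· < ·) (factor w k j) (factor w (k - p) j) := by
    rw [← ht]; exact lex_append_cons _ _ _ _
  have hlex2 : List.Lex (· < ·) (factor w (k - p) j) (factor w k j) :=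
    hmax (k - p) hik' (by omega) (by omega)
  exact (Std.Asymm.asymm (r := List.Lex (· < ·)) _ _ hlex1) hlex2
end

section
/- If w[k..j] is the lexicographically greatest proper suffix of the factor of a run of smallest period p, then the prefix w[k..k+p-1] of length p is border-free (it has no proper nonempty border). -/
open List

universe u

/-- A border of `u`: a nonempty proper prefix that is also a suffix. -/
def IsBorder {α : Type u} (b u : List α) : Prop := b ≠ [] ∧ b ≠ u ∧ b <+: u ∧ b <:+ u

/-- A word is border-free if it has no border. -/
def BorderFree {α : Type u} (u : List α) : Prop := ∀ b, ¬ IsBorder b u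

lemma hasPeriodLen_len_succ (u : List β) : HasPeriodLen u (u.length + 1) :=
  ⟨by omega, fun k hk => by omega⟩

lemma minPeriod_has (u : List β) : HasPeriodLen u (minPeriod u) :=
  Nat.sInf_mem (s := {p | HasPeriodLen u p}) ⟨_, hasPeriodLen_len_succ u⟩

lemma minPeriod_le' {u : List β} {q : ℕ} (h : HasPeriodLen u q) : minPeriod u ≤ q :=
  Nat.sInf_le h

lemma mod_eq_of_period {u : List β} {r : ℕ} (hr1 : 1 ≤ r)
    (hp : ∀ m, m + r < u.length → u[m]? = u[m + r]?) :
    ∀ m, m < u.length → u[m]? = u[m % r]? := by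
  intro m
  induction m using Nat.strong_induction_on with
  | _ m ih =>
    intro hm
    by_cases h : m < r
    · rw [Nat.mod_eq_of_lt h]
    · push_neg at h
      have h1 : m - r + r = m := by omega
      have e1 : u[m - r]? = u[m]? := by
        have := hp (m - r) (by omega)
        rwa [h1] at this
      rw [← e1, ih (m - r) (by omega) (by omega), Nat.mod_eq_sub_mod h]

/-- Fine and Wilf, weak version. -/
lemma fw_aux : ∀ (n : ℕ) (u : List β) (p r : ℕ), r ≤ p → p ≤ n →
    HasPeriodLen u p → HasPeriodLen u r → p + r ≤ u.length →
    HasPeriodLen u (Nat.gcd p r) := by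
  intro n
  induction n with
  | zero => intro u p r _ hp0 hp _ _; exact absurd hp.1 (by omega)
  | succ n ih =>
    intro u p r hrp hpn hp hr hlen
    rcases eq_or_lt_of_le hrp with heq | hlt
    · subst heq; rwa [Nat.gcd_self]
    · -- r < p; derive period p - r
      have hpr : HasPeriodLen u (p - r) := by
        refine ⟨by omega, fun m hm => ?_⟩
        by_cases hcase : m + p < u.length
        · have e1 := hp.2 m hcase
          have e2 := hr.2 (m + (p - r)) (by omega)
          rw [show m + (p - r) + r = m + p by omega] at e2
          rw [e1, e2]
        · have hmr : r ≤ m := by omega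
          have e1 := hr.2 (m - r) (by omega)
          rw [show m - r + r = m by omega] at e1
          have e2 := hp.2 (m - r) (by omega)
          rw [show m - r + p = m + (p - r) by omega] at e2
          rw [← e1, e2]
      have hr1 := hr.1
      have hp1 := hp.1
      have hg : Nat.gcd (p - r) r = Nat.gcd p r := Nat.gcd_sub_self_left hrp
      by_cases hc : r ≤ p - r
      · have := ih u (p - r) r hc (by omega) hpr hr (by omega)
        rwa [hg] at this
      · have h1 : p - r ≤ r := by omega
        have h2 : r ≤ n := by omega
        have := ih u r (p - r) h1 h2 hr hpr (by omega)
        rwa [Nat.gcd_comm, hg] at this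

lemma fw {u : List β} {p r : ℕ} (hp : HasPeriodLen u p) (hr : HasPeriodLen u r)
    (hlen : p + r ≤ u.length) : HasPeriodLen u (Nat.gcd p r) := by
  rcases le_total r p with h | h
  · exact fw_aux p u p r h le_rfl hp hr hlen
  · rw [Nat.gcd_comm]; exact fw_aux r u r p h le_rfl hr hp (by omega)

lemma lex_append {r : β → β → Prop} (l t : List β) (ht : t ≠ []) : List.Lex r l (l ++ t) := by
  induction l with
  | nil => cases t with
    | nil => exact absurd rfl ht
    | cons a t' => exact List.Lex.nil
  | cons a l ih => exact List.Lex.cons ih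

lemma lex_of_prefix_ne {r : β → β → Prop} {l₁ l₂ : List β} (h : l₁ <+: l₂) (hne : l₁ ≠ l₂) :
    List.Lex r l₁ l₂ := by
  obtain ⟨t, rfl⟩ := h
  have ht : t ≠ [] := by rintro rfl; simp at hne
  exact lex_append l₁ t ht

lemma lex_of_diff {r : β → β → Prop} :
    ∀ (n : ℕ) (l₁ l₂ : List β) (a b : β), (∀ m, m < n → l₁[m]? = l₂[m]?) →
      l₁[n]? = some a → l₂[n]? = some b → r a b → List.Lex r l₁ l₂ := by
  intro n
  induction n with
  | zero =>
    intro l₁ l₂ a b _ h1 h2 hr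
    cases l₁ with
    | nil => simp at h1
    | cons x t₁ =>
      cases l₂ with
      | nil => simp at h2
      | cons y t₂ =>
        simp only [getElem?_cons_zero, Option.some.injEq] at h1 h2
        subst h1; subst h2
        exact List.Lex.rel hr
  | succ n ih =>
    intro l₁ l₂ a b hag h1 h2 hr
    cases l₁ with
    | nil => simp at h1
    | cons x t₁ =>
      cases l₂ with
      | nil => simp at h2
      | cons y t₂ =>
        have h0 := hag 0 (by omega)
        simp only [getElem?_cons_zero, Option.some.injEq] at h0
        subst h0
        refine List.Lex.cons (ih t₁ t₂ a b ?_ ?_ ?_ hr)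
        · intro m hm
          have := hag (m + 1) (by omega)
          simpa using this
        · simpa using h1
        · simpa using h2

lemma lex_destruct {r : β → β → Prop} :
    ∀ {l₁ l₂ : List β}, List.Lex r l₁ l₂ →
      l₁ <+: l₂ ∨ ∃ (n : ℕ) (a b : β), (∀ m, m < n → l₁[m]? = l₂[m]?) ∧
        l₁[n]? = some a ∧ l₂[n]? = some b ∧ r a b := by
  intro l₁ l₂ h
  induction h with
  | nil => exact Or.inl (nil_prefix)
  | @rel a₁ t₁ a₂ t₂ hr =>
    exact Or.inr ⟨0, a₁, a₂, fun m hm => by omega, by simp, by simp, hr⟩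
  | @cons a t₁ t₂ h ih =>
    rcases ih with hp | ⟨n, x, y, hag, h1, h2, hr⟩
    · left
      obtain ⟨t, rfl⟩ := hp
      exact ⟨t, rfl⟩
    · right
      refine ⟨n + 1, x, y, ?_, by simpa using h1, by simpa using h2, hr⟩
      intro m hm
      cases m with
      | zero => simp
      | succ m => simpa using hag m (by omega)

lemma lex_asymm [LinearOrder β] {l₁ l₂ : List β}
    (h1 : List.Lex (· < ·) l₁ l₂) (h2 : List.Lex (· < ·) l₂ l₁) : False := by
  have : IsAsymm β (· < ·) := ⟨fun a b => lt_asymm⟩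
  exact (List.Lex.asymm (· < ·)).asymm _ _ h1 h2

/-- Pin the first difference of a lex-comparison. -/
lemma lex_pin {r : β → β → Prop} (hirr : ∀ a : β, ¬ r a a) {l₁ l₂ : List β}
    (h : List.Lex r l₁ l₂) (n : ℕ)
    (hag : ∀ m, m < n → l₁[m]? = l₂[m]?) (hne : l₁[n]? ≠ l₂[n]?)
    (hn1 : n < l₁.length) (hn2 : n < l₂.length) :
    ∃ (a b : β), l₁[n]? = some a ∧ l₂[n]? = some b ∧ r a b := by
  rcases lex_destruct h with hp | ⟨n', x, y, hag', h1, h2, hr⟩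
  · obtain ⟨t, rfl⟩ := hp
    refine absurd ?_ hne
    rw [List.getElem?_append]
    simp only [hn1, if_pos]
  · rcases lt_trichotomy n' n with hlt | rfl | hgt
    · have := hag n' hlt
      rw [h1, h2] at this
      obtain rfl : x = y := by simpa using this
      exact absurd hr (hirr x)
    · exact ⟨x, y, h1, h2, hr⟩
    · exact absurd (hag' n hgt) hne

lemma ext_period (v : List β) (c p g : ℕ) (hp1 : 1 ≤ p)
    (hc : c ≤ p) (h2 : 2 * p ≤ v.length)
    (hpv : ∀ m, m + p < v.length → v[m]? = v[m + p]?)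
    (hg1 : 1 ≤ g) (hgp : g ∣ p)
    (hgs : ∀ m, m + g < v.length - c → v[c + m]? = v[c + m + g]?) :
    HasPeriodLen v g := by
  have SC : ∀ (t x : ℕ), c ≤ x → x + g * t < v.length → v[x]? = v[x + g * t]? := by
    intro t
    induction t with
    | zero => intro x _ _; simp
    | succ t ih =>
      intro x hcx hb
      have hmul : g * (t + 1) = g * t + g := by ring
      have e1 : v[x]? = v[x + g * t]? := ih x hcx (by omega)
      have e2 := hgs (x + g * t - c) (by omega)
      rw [show c + (x + g * t - c) = x + g * t by omega] at e2
      rw [e1, e2]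
      congr 1
      omega
  refine ⟨hg1, fun m hm => ?_⟩
  by_cases hcm : c ≤ m
  · have := SC 1 m hcm (by omega)
    rwa [Nat.mul_one] at this
  · push_neg at hcm
    have e0 : v[m]? = v[m + p]? := hpv m (by omega)
    obtain ⟨t, rfl⟩ := hgp
    rcases t with _ | t'
    · omega
    have hmul : g * (t' + 1) = g * t' + g := by ring
    by_cases h3 : m + g < c
    · have e1 : v[m + g]? = v[m + g + g * (t' + 1)]? := hpv (m + g) (by omega)
      have e2 : v[m + g * (t'+1)]? = v[m + g * (t'+1) + g]? := by
        have := hgs (m + g * (t'+1) - c) (by omega)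
        rw [show c + (m + g * (t'+1) - c) = m + g * (t'+1) by omega] at this
        exact this
      rw [e0, e1, e2]
      congr 1
      omega
    · have e1 : v[m + g]? = v[m + g + g * t']? := SC t' (m + g) (by omega) (by omega)
      rw [e0, e1]
      congr 1
      ring

section Core
variable {β : Type u}

lemma stepB [LinearOrder β] (v : List β) (c : ℕ)
    (hc1 : 1 ≤ c) (hc2 : c < v.length)
    (hmax : ∀ c', 1 ≤ c' → c' < v.length → c' ≠ c →
      List.Lex (· < ·) (v.drop c') (v.drop c)) :
    c ≤ minPeriod v := by
  set p := minPeriod v with hpdef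
  by_contra hcp
  push_neg at hcp
  have hp := minPeriod_has v
  have hp1 := hp.1
  have hpv := hp.2
  rw [← hpdef] at hp1 hpv
  have hlex := hmax (c - p) (by omega) (by omega) (by omega)
  have heq : v.drop c = (v.drop (c - p)).take (v.length - c) := by
    apply List.ext_getElem?
    intro n
    rw [List.getElem?_take]
    split
    · rename_i h
      rw [List.getElem?_drop, List.getElem?_drop]
      have := hpv (c - p + n) (by omega)
      rw [show c - p + n + p = c + n by omega] at this
      exact this.symm
    · rename_i h
      apply List.getElem?_eq_none
      rw [List.length_drop]
      omega
  have hpre : v.drop c <+: v.drop (c - p) := by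
    rw [heq]; exact List.take_prefix _ _
  have hne : v.drop c ≠ v.drop (c - p) := by
    intro h
    have := congrArg List.length h
    rw [List.length_drop, List.length_drop] at this
    omega
  exact lex_asymm hlex (lex_of_prefix_ne hpre hne)

lemma core [LinearOrder β] (v : List β) (c : ℕ)
    (h2 : 2 * minPeriod v ≤ v.length)
    (hc1 : 1 ≤ c) (hc2 : c < v.length)
    (hmax : ∀ c', 1 ≤ c' → c' < v.length → c' ≠ c →
      List.Lex (· < ·) (v.drop c') (v.drop c)) :
    BorderFree ((v.drop c).take (minPeriod v)) := by
  classical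
  set p := minPeriod v with hpdef
  have hp := minPeriod_has v
  have hp1 := hp.1
  have hpv := hp.2
  rw [← hpdef] at hp1 hpv
  have hcp : c ≤ p := stepB v c hc1 hc2 hmax
  set L := v.length - c with hLdef
  have hlen : c + L = v.length := by omega
  have hLs : (v.drop c).length = L := by rw [List.length_drop]
  have hpL : p ≤ L := by omega
  -- index tool
  have S : ∀ x : ℕ, (v.drop c)[x]? = v[c + x]? := fun x => List.getElem?_drop (xs := v) (i := c) (j := x)
  -- p is a period of s
  have SP : ∀ m, m + p < L → (v.drop c)[m]? = (v.drop c)[m + p]? := by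
    intro m hm
    rw [S, S, show c + (m + p) = c + m + p by omega]
    exact hpv (c + m) (by omega)
  rintro b ⟨hbne, hbnet, hbpre, hbsuf⟩
  have ht : ((v.drop c).take p).length = p := by
    rw [List.length_take]; omega
  set lb := b.length with hlbdef
  have hlb1 : 1 ≤ lb := by
    rw [hlbdef]
    exact List.length_pos_iff.2 hbne
  have hlb_le : lb ≤ p := by
    have := hbpre.length_le
    omega
  have hlb_lt : lb < p := by
    rcases eq_or_lt_of_le hlb_le with h | h
    · exact absurd (hbpre.eq_of_length (by omega)) hbnet
    · exact h
  set d := p - lb with hddef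
  have hd1 : 1 ≤ d := by omega
  have hdp : d < p := by omega
  have T : ∀ y, y < p → ((v.drop c).take p)[y]? = (v.drop c)[y]? := by
    intro y hy
    rw [List.getElem?_take]
    simp [hy]
  -- border equalities
  have E1 : ∀ x, x < lb → (v.drop c)[x]? = (v.drop c)[x + d]? := by
    intro x hx
    obtain ⟨tb, htb⟩ := hbpre
    obtain ⟨ub, hub⟩ := hbsuf
    have hul : ub.length = d := by
      have := congrArg List.length hub
      rw [List.length_append] at this
      omega
    have e1 : ((v.drop c).take p)[x]? = b[x]? := by
      rw [← htb, List.getElem?_append]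
      simp [show x < b.length by omega]
    have e2 : ((v.drop c).take p)[d + x]? = b[x]? := by
      rw [← hub, List.getElem?_append_right (by omega), hul]
      congr 1
      omega
    rw [← T x (by omega), ← T (x + d) (by omega), e1, show x + d = d + x by omega, e2]
  by_cases H : ∀ m, m + d < L → (v.drop c)[m]? = (v.drop c)[m + d]?
  · -- Case 2 : d is a full period of the suffix
    set r := minPeriod (v.drop c) with hrdef
    have hr := minPeriod_has (v.drop c)
    have hr1 := hr.1
    have hrper : ∀ m, m + r < L → (v.drop c)[m]? = (v.drop c)[m + r]? := by
      intro m hm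
      exact hr.2 m (by rwa [hLs])
    have hrd : r ≤ d := by
      refine minPeriod_le' ⟨hd1, fun k hk => H k (by rwa [hLs] at hk)⟩
    have hrp : r < p := by omega
    have MOD : ∀ m, m < L → (v.drop c)[m]? = (v.drop c)[m % r]? := by
      intro m hm
      exact mod_eq_of_period hr1 (fun k hk => hrper k (by rwa [hLs] at hk)) m (by rwa [hLs])
    set sh := p % r with hshdef
    have hshr : sh < r := Nat.mod_lt _ (by omega)
    have hq := Nat.div_add_mod p r
    have hq1 : 1 ≤ p / r := (Nat.one_le_div_iff (by omega)).2 (by omega)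
    have hpsh : r + sh ≤ p := by
      have h5 : r * 1 ≤ r * (p / r) := Nat.mul_le_mul_left r hq1
      omega
    by_cases hsh0 : sh = 0
    · -- r divides p : extend period r to all of v, contradiction
      have hdvd : r ∣ p := Nat.dvd_of_mod_eq_zero hsh0
      have hvper : HasPeriodLen v r := by
        refine ext_period v c p r (by omega) hcp h2 hpv (by omega) hdvd ?_
        intro m hm
        have := hrper m (by omega)
        rwa [S, S, show c + (m + r) = c + m + r by omega] at this
      exact absurd (minPeriod_le' hvper) (by omega)
    · have hsh1 : 1 ≤ sh := by omega
      by_cases hLbig : p + r ≤ L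
      · -- Fine–Wilf, then extend period gcd to v
        have hsp : HasPeriodLen (v.drop c) p := ⟨by omega, fun k hk => SP k (by rwa [hLs] at hk)⟩
        have hg := fw hsp hr (by omega)
        set g := Nat.gcd p r with hgdef
        have hg1 : 1 ≤ g := Nat.gcd_pos_of_pos_left r (by omega)
        have hgr : g ≤ r := Nat.gcd_le_right (n := r) p (by omega)
        have hvper : HasPeriodLen v g := by
          refine ext_period v c p g (by omega) hcp h2 hpv hg1 (Nat.gcd_dvd_left p r) ?_
          intro m hm
          have := hg.2 m (by rwa [hLs])
          rwa [S, S, show c + (m + g) = c + m + g by omega] at this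
        exact absurd (minPeriod_le' hvper) (by omega)
      · -- hard case : forward/backward comparison around the maximal suffix
        push_neg at hLbig
        have hcsh : sh < c := by omega
        have hnot : ¬ ∀ m, m + sh < L → (v.drop c)[m]? = (v.drop c)[m + sh]? := by
          intro hall
          have : HasPeriodLen (v.drop c) sh := ⟨hsh1, fun k hk => hall k (by rwa [hLs] at hk)⟩
          have := minPeriod_le' this
          omega
        push_neg at hnot
        set m₀ := Nat.find hnot with hm₀def
        obtain ⟨hm₀L, hm₀ne⟩ := Nat.find_spec hnot
        rw [← hm₀def] at hm₀L hm₀ne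
        have hmin : ∀ m, m < m₀ → (v.drop c)[m]? = (v.drop c)[m + sh]? := by
          intro m hm
          have := Nat.find_min hnot (by omega : m < Nat.find hnot)
          push_neg at this
          exact this (by omega)
        have hm₀r : m₀ < r := by
          by_contra hcon
          push_neg at hcon
          have e1 := hrper (m₀ - r) (by omega)
          rw [show m₀ - r + r = m₀ by omega] at e1
          have e2 := hrper (m₀ - r + sh) (by omega)
          rw [show m₀ - r + sh + r = m₀ + sh by omega] at e2
          have e3 := hmin (m₀ - r) (by omega)
          exact hm₀ne (e1.symm.trans (e3.trans e2))
        -- forward comparison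
        have hlexf := hmax (c + sh) (by omega) (by omega) (by omega)
        have Sf : ∀ x : ℕ, (v.drop (c + sh))[x]? = (v.drop c)[x + sh]? := by
          intro x
          rw [List.getElem?_drop, S, show c + (x + sh) = c + sh + x by omega]
        have pinf := lex_pin (fun a : β => lt_irrefl a) hlexf m₀
          (fun m hm => by rw [Sf, hmin m hm])
          (by rw [Sf]; exact fun h => hm₀ne h.symm)
          (by rw [List.length_drop]; omega)
          (by rw [hLs]; omega)
        obtain ⟨a, b1, haf, hbf, habf⟩ := pinf
        rw [Sf] at haf
        -- backward comparison
        have hlexb := hmax (c - sh) (by omega) (by omega) (by omega)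
        have Sb : ∀ x : ℕ, (v.drop (c - sh))[x]? = v[c - sh + x]? := fun x =>
          List.getElem?_drop (xs := v) (i := c - sh) (j := x)
        have hagb : ∀ m, m < sh + m₀ → (v.drop (c - sh))[m]? = (v.drop c)[m]? := by
          intro m hm
          by_cases hm2 : m < sh
          · rw [Sb]
            have e1 : v[c - sh + m]? = v[c - sh + m + p]? := hpv (c - sh + m) (by omega)
            rw [e1, show c - sh + m + p = c + (p - sh + m) by omega, ← S]
            have e2 := MOD (p - sh + m) (by omega)
            have e3 := MOD m (by omega)
            rw [e2, e3]
            congr 1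
            rw [show p - sh + m = r * (p / r) + m by omega, Nat.mul_add_mod]
          · push_neg at hm2
            rw [Sb, show c - sh + m = c + (m - sh) by omega, ← S]
            have e1 := hmin (m - sh) (by omega)
            rw [show m - sh + sh = m by omega] at e1
            exact e1
        have pinb := lex_pin (fun a : β => lt_irrefl a) hlexb (sh + m₀)
          hagb
          (by
            rw [Sb, show c - sh + (sh + m₀) = c + m₀ by omega, ← S]
            intro h
            rw [show sh + m₀ = m₀ + sh by omega] at h
            exact hm₀ne h)
          (by rw [List.length_drop]; omega)
          (by rw [hLs]; omega)
        obtain ⟨a', b2, hab', hbb', habb'⟩ := pinb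
        rw [Sb, show c - sh + (sh + m₀) = c + m₀ by omega, ← S] at hab'
        rw [show sh + m₀ = m₀ + sh by omega] at hbb'
        rw [hbf] at hab'
        rw [haf] at hbb'
        obtain rfl : b1 = a' := by simpa using hab'
        obtain rfl : a = b2 := by simpa using hbb'
        exact absurd habb' (lt_asymm habf)
  · -- Case 1 : the border's period breaks somewhere in the suffix
    push_neg at H
    set m₀ := Nat.find H with hm₀def
    obtain ⟨hm₀L, hm₀ne⟩ := Nat.find_spec H
    rw [← hm₀def] at hm₀L hm₀ne
    have hmin : ∀ m, m < m₀ → (v.drop c)[m]? = (v.drop c)[m + d]? := by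
      intro m hm
      have := Nat.find_min H (by omega : m < Nat.find H)
      push_neg at this
      exact this (by omega)
    have hm₀lb : lb ≤ m₀ := by
      by_contra hcon
      push_neg at hcon
      exact hm₀ne (E1 m₀ hcon)
    -- forward inequality at m₀ for shift d
    have hlexf := hmax (c + d) (by omega) (by omega) (by omega)
    have Sf : ∀ x : ℕ, (v.drop (c + d))[x]? = (v.drop c)[x + d]? := by
      intro x
      rw [List.getElem?_drop, S, show c + (x + d) = c + d + x by omega]
    have pinf := lex_pin (fun a : β => lt_irrefl a) hlexf m₀
      (fun m hm => by rw [Sf, hmin m hm])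
      (by rw [Sf]; exact fun h => hm₀ne h.symm)
      (by rw [List.length_drop]; omega)
      (by rw [hLs]; omega)
    obtain ⟨a, b1, haf, hbf, habf⟩ := pinf
    rw [Sf] at haf
    -- now build a lex inequality contradicting maximality, at shift lb
    have hlexb := hmax (c + lb) (by omega) (by omega) (by omega)
    have Sb : ∀ x : ℕ, (v.drop (c + lb))[x]? = (v.drop c)[x + lb]? := by
      intro x
      rw [List.getElem?_drop, S, show c + (x + lb) = c + lb + x by omega]
    have LEX : List.Lex (· < ·) (v.drop c) (v.drop (c + lb)) := by
      refine lex_of_diff (m₀ - lb) (v.drop c) (v.drop (c + lb)) a b1 ?_ ?_ ?_ habf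
      · intro m hm
        rw [Sb]
        have e1 := hmin (lb + m) (by omega)
        have e2 := SP m (by omega)
        rw [show lb + m + d = m + p by omega] at e1
        rw [show m + lb = lb + m by omega]
        exact e2.trans e1.symm
      · have e1 := SP (m₀ - lb) (by omega)
        rw [show m₀ - lb + p = m₀ + d by omega] at e1
        rw [e1]
        exact haf
      · rw [Sb, show m₀ - lb + lb = m₀ by omega]
        exact hbf
    exact lex_asymm LEX hlexb

end Core

lemma factor_drop {β : Type u} (w : List β) (i j c' : ℕ) (hc' : c' ≤ j - i) :
    (factor w i j).drop c' = factor w (i + c') j := by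
  show ((w.drop i).take (j - i + 1)).drop c' = (w.drop (i + c')).take (j - (i + c') + 1)
  rw [List.drop_take, List.drop_drop]
  rw [show j - i + 1 - c' = j - (i + c') + 1 by omega]

lemma mainAux {β : Type u} [LinearOrder β] (w : List β) (i j k : ℕ)
    (hij : i < j) (hjw : j < w.length)
    (h2 : 2 * minPeriod (factor w i j) ≤ j - i + 1)
    (hik : i < k) (hkj : k ≤ j)
    (hmaxk : ∀ k', i < k' → k' ≤ j → k' ≠ k →
      List.Lex (· < ·) (factor w k' j) (factor w k j)) :
    BorderFree (factor w k (k + minPeriod (factor w i j) - 1)) := by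
  set v := factor w i j with hvdef
  have hvlen : v.length = j - i + 1 := by
    rw [hvdef]
    show ((w.drop i).take (j - i + 1)).length = j - i + 1
    rw [List.length_take, List.length_drop]
    omega
  have hp1 := (minPeriod_has v).1
  have hc1 : 1 ≤ k - i := by omega
  have hc2 : k - i < v.length := by omega
  have hmax : ∀ c', 1 ≤ c' → c' < v.length → c' ≠ k - i →
      List.Lex (· < ·) (v.drop c') (v.drop (k - i)) := by
    intro c' h1 h2' h3
    have hd1 := factor_drop w i j c' (by omega)
    have hd2 := factor_drop w i j (k - i) (by omega)
    rw [show i + (k - i) = k by omega] at hd2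
    rw [← hvdef] at hd1 hd2
    rw [hd1, hd2]
    exact hmaxk (i + c') (by omega) (by omega) (by omega)
  have hble := stepB v (k - i) hc1 hc2 hmax
  have hcore := core v (k - i) (by omega) hc1 hc2 hmax
  have hEQ : factor w k (k + minPeriod v - 1) = (v.drop (k - i)).take (minPeriod v) := by
    rw [hvdef]
    show (w.drop k).take (k + minPeriod v - 1 - k + 1)
        = (((w.drop i).take (j - i + 1)).drop (k - i)).take (minPeriod v)
    rw [List.drop_take, List.drop_drop, List.take_take,
      show i + (k - i) = k by omega,
      Nat.min_eq_left (by omega : minPeriod v ≤ j - i + 1 - (k - i)),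
      show k + minPeriod v - 1 - k + 1 = minPeriod v by omega]
  rw [hEQ]
  exact hcore
/-- If `w[k..j]` is the greatest proper suffix of the factor of a run of smallest period
`p` (with respect to some lexicographic order), then its length-`p` prefix `w[k..k+p-1]`
is border-free. -/
theorem greatest_proper_suffix_prefix_borderFree {α : Type u} [LinearOrder α]
    (w : List α) (i j k : ℕ) (h : IsRun w i j)
    (hk : IsGreatestProperSuffixPos (List.Lex (· < ·)) w i j k ∨
          IsGreatestProperSuffixPos (List.Lex (· > ·)) w i j k) :
    BorderFree (factor w k (k + minPeriod (factor w i j) - 1)) := by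
  obtain ⟨hij, hjw, h2, -, -⟩ := h
  rcases hk with ⟨hik, hkj, hmaxk⟩ | ⟨hik, hkj, hmaxk⟩
  · exact mainAux w i j k hij hjw h2 hik hkj hmaxk
  · exact mainAux (β := αᵒᵈ) w i j k hij hjw h2 hik hkj hmaxk
end
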